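/- Let p > 3 be a prime, let Γ be the group presented as ⟨x, y : x^p = y^p = (xy)^p = 1⟩, and let k be an integer with 1 ≤ k ≤ p-2. Let φ : Γ → ℤ/pℤ be the (well-defined) group homomorphism to the additive group ℤ/pℤ determined by φ(x) = 1 and φ(y) = k. Then φ is surjective and its kernel is exactly the subgroup of Γ generated by the p elements x^{jk} (x^k y⁻¹) x^{-jk} for j = 0, 1, ..., p-1. -/

import Mathlib

/-- The relations of the presentation `⟨x, y : x^p = y^p = (xy)^p = 1⟩`. -/
def rels2 (p : ℕ) : Set (FreeGroup (Fin 2)) :=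
  {FreeGroup.of 0 ^ p, FreeGroup.of 1 ^ p, (FreeGroup.of 0 * FreeGroup.of 1) ^ p}

/-- The group `Γ = ⟨x, y : x^p = y^p = (xy)^p = 1⟩`. -/
def Gamma2 (p : ℕ) : Type := PresentedGroup (rels2 p)

instance (p : ℕ) : Group (Gamma2 p) := by unfold Gamma2; infer_instance

/-- The generator `x` of `Γ`. -/
def xg (p : ℕ) : Gamma2 p := PresentedGroup.of 0

/-- The generator `y` of `Γ`. -/
def yg (p : ℕ) : Gamma2 p := PresentedGroup.of 1

namespace St7

lemma x_pow_p (p : ℕ) : (xg p) ^ p = 1 := by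
  show (PresentedGroup.mk (rels2 p) (FreeGroup.of 0)) ^ p = 1
  rw [← map_pow]
  show (QuotientGroup.mk' (Subgroup.normalClosure (rels2 p))) _ = 1
  rw [QuotientGroup.mk'_apply, QuotientGroup.eq_one_iff]
  exact Subgroup.subset_normalClosure (Or.inl rfl)

lemma x_pow_mod (p : ℕ) (a : ℕ) : (xg p) ^ a = (xg p) ^ (a % p) := by
  conv_lhs => rw [← Nat.mod_add_div a p, pow_add, pow_mul, x_pow_p, one_pow, mul_one]

lemma x_pow_congr (p : ℕ) (a b : ℕ) (h : a % p = b % p) :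
    (xg p) ^ a = (xg p) ^ b := by
  rw [x_pow_mod p a, x_pow_mod p b, h]

lemma x_pow_inv {p : ℕ} (hp : 0 < p) (m : ℕ) : (xg p ^ m)⁻¹ = xg p ^ (m * (p - 1)) := by
  obtain ⟨q, rfl⟩ : ∃ q, p = q + 1 := ⟨p - 1, by omega⟩
  refine inv_eq_of_mul_eq_one_right ?_
  rw [← pow_add]
  have h : m + m * (q + 1 - 1) = (q + 1) * m := by simp; ring
  rw [h, pow_mul, x_pow_p, one_pow]

lemma x_pow_inv' {p : ℕ} (hp : 0 < p) (m : ℕ) : (xg p ^ (m * (p - 1)))⁻¹ = xg p ^ m := by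
  rw [← x_pow_inv hp m, inv_inv]

section

variable (p k : ℕ)

def S : Set (Gamma2 p) :=
  {g : Gamma2 p | ∃ j : ℕ, j < p ∧
      g = xg p ^ (j * k) * (xg p ^ k * (yg p)⁻¹) * (xg p ^ (j * k))⁻¹}

def N : Subgroup (Gamma2 p) := Subgroup.closure (S p k)

variable {p k}

lemma t_mem (hp : 0 < p) : xg p ^ k * (yg p)⁻¹ ∈ N p k :=
  Subgroup.subset_closure ⟨0, hp, by simp⟩

lemma conj_mem (hp : p.Prime) (hk1 : 1 ≤ k) (hkp : k < p) :
    ∀ m : ℕ, ∀ g ∈ N p k, xg p ^ m * g * (xg p ^ m)⁻¹ ∈ N p k := by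
  have hco : Nat.Coprime k p :=
    Nat.Coprime.symm ((Nat.Prime.coprime_iff_not_dvd hp).mpr
      (fun hdvd => absurd (Nat.le_of_dvd (by omega) hdvd) (by omega)))
  obtain ⟨i, hi⟩ : ∃ i, k * i % p = 1 :=
    let ⟨i, _, h⟩ := Nat.exists_mul_mod_eq_one_of_coprime hco hp.one_lt; ⟨i, h⟩
  intro m g hg
  induction hg using Subgroup.closure_induction with
  | mem s hs =>
    obtain ⟨j, hj, rfl⟩ := hs
    apply Subgroup.subset_closure
    refine ⟨(m + j * k) * i % p, Nat.mod_lt _ hp.pos, ?_⟩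
    have hx : xg p ^ ((m + j * k) * i % p * k) = xg p ^ (m + j * k) := by
      apply x_pow_congr
      calc ((m + j * k) * i % p) * k ≡ (m + j * k) * i * k [MOD p] :=
            (Nat.mod_modEq _ p).mul_right k
        _ = (m + j * k) * (k * i) := by ring
        _ ≡ (m + j * k) * 1 [MOD p] := by
            refine Nat.ModEq.mul_left _ ?_
            show k * i % p = 1 % p
            rw [hi, Nat.mod_eq_of_lt hp.one_lt]
        _ = m + j * k := by ring
    rw [hx, pow_add]
    group
  | one => simpa using one_mem _
  | mul a b _ _ ha hb =>
    have : xg p ^ m * (a * b) * (xg p ^ m)⁻¹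
        = (xg p ^ m * a * (xg p ^ m)⁻¹) * (xg p ^ m * b * (xg p ^ m)⁻¹) := by group
    rw [this]; exact mul_mem ha hb
  | inv a _ ha =>
    have : xg p ^ m * a⁻¹ * (xg p ^ m)⁻¹ = (xg p ^ m * a * (xg p ^ m)⁻¹)⁻¹ := by group
    rw [this]; exact inv_mem ha

lemma conj_inv_mem (hp : p.Prime) (hk1 : 1 ≤ k) (hkp : k < p) :
    ∀ m : ℕ, ∀ g ∈ N p k, (xg p ^ m)⁻¹ * g * xg p ^ m ∈ N p k := by
  intro m g hg
  rw [x_pow_inv hp.pos m, ← x_pow_inv' hp.pos m]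
  exact conj_mem hp hk1 hkp (m * (p - 1)) g hg

lemma yconj_mem (hp : p.Prime) (hk1 : 1 ≤ k) (hkp : k < p) :
    ∀ g ∈ N p k, yg p * g * (yg p)⁻¹ ∈ N p k := by
  intro g hg
  have hy : yg p * g * (yg p)⁻¹
      = (xg p ^ k * (yg p)⁻¹)⁻¹ * (xg p ^ k * g * (xg p ^ k)⁻¹) * (xg p ^ k * (yg p)⁻¹) := by
    group
  rw [hy]
  exact mul_mem (mul_mem (inv_mem (t_mem hp.pos)) (conj_mem hp hk1 hkp k g hg)) (t_mem hp.pos)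

lemma yconj_inv_mem (hp : p.Prime) (hk1 : 1 ≤ k) (hkp : k < p) :
    ∀ g ∈ N p k, (yg p)⁻¹ * g * yg p ∈ N p k := by
  intro g hg
  have hy : (yg p)⁻¹ * g * yg p
      = (xg p ^ k)⁻¹ * ((xg p ^ k * (yg p)⁻¹) * g * (xg p ^ k * (yg p)⁻¹)⁻¹) * xg p ^ k := by
    group
  rw [hy]
  exact conj_inv_mem hp hk1 hkp k _
    (mul_mem (mul_mem (t_mem hp.pos) hg) (inv_mem (t_mem hp.pos)))

lemma closure_xy (p : ℕ) : Subgroup.closure {xg p, yg p} = ⊤ := by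
  have h : ({xg p, yg p} : Set (Gamma2 p))
      = Set.range (PresentedGroup.of : Fin 2 → PresentedGroup (rels2 p)) := by
    ext a
    constructor
    · rintro (rfl | rfl)
      exacts [⟨0, rfl⟩, ⟨1, rfl⟩]
    · rintro ⟨i, rfl⟩
      fin_cases i
      exacts [Or.inl rfl, Or.inr rfl]
  rw [h]
  exact PresentedGroup.closure_range_of _

lemma decomp (hp : p.Prime) (hk1 : 1 ≤ k) (hkp : k < p) (g : Gamma2 p) :
    ∃ m : ℕ, (xg p ^ m)⁻¹ * g ∈ N p k := by
  have hg : g ∈ Subgroup.closure {xg p, yg p} := by rw [closure_xy]; trivial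
  induction hg using Subgroup.closure_induction with
  | mem s hs =>
    rcases hs with rfl | rfl
    · exact ⟨1, by simpa using one_mem _⟩
    · refine ⟨k, ?_⟩
      have h : (xg p ^ k)⁻¹ * yg p
          = ((yg p)⁻¹ * (xg p ^ k * (yg p)⁻¹) * yg p)⁻¹ := by group
      rw [h]
      exact inv_mem (yconj_inv_mem hp hk1 hkp _ (t_mem hp.pos))
  | one => exact ⟨0, by simpa using one_mem _⟩
  | mul a b _ _ ha hb =>
    obtain ⟨ma, hma⟩ := ha
    obtain ⟨mb, hmb⟩ := hb
    refine ⟨ma + mb, ?_⟩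
    have h : (xg p ^ (ma + mb))⁻¹ * (a * b)
        = ((xg p ^ mb)⁻¹ * ((xg p ^ ma)⁻¹ * a) * xg p ^ mb) * ((xg p ^ mb)⁻¹ * b) := by
      rw [pow_add]; group
    rw [h]
    exact mul_mem (conj_inv_mem hp hk1 hkp mb _ hma) hmb
  | inv a _ ha =>
    obtain ⟨ma, hma⟩ := ha
    refine ⟨ma * (p - 1), ?_⟩
    have h : (xg p ^ (ma * (p - 1)))⁻¹ * a⁻¹
        = xg p ^ ma * ((xg p ^ ma)⁻¹ * a)⁻¹ * (xg p ^ ma)⁻¹ := by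
      rw [x_pow_inv' hp.pos]; group
    rw [h]
    exact conj_mem hp hk1 hkp ma _ (inv_mem hma)

end

end St7

namespace St7

lemma zpow_p (p : ℕ) (z : Multiplicative (ZMod p)) : z ^ p = 1 := by
  rw [← ofAdd_toAdd z, ← ofAdd_nsmul, nsmul_eq_mul, ZMod.natCast_self, zero_mul]
  rfl

lemma ofAdd_one_pow (p m : ℕ) :
    (Multiplicative.ofAdd (1 : ZMod p)) ^ m = Multiplicative.ofAdd (m : ZMod p) := by
  rw [← ofAdd_nsmul, nsmul_eq_mul, mul_one]

end St7

theorem stmt_7 (p : ℕ) (hp : p.Prime) (hp3 : 3 < p) (k : ℕ)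
    (hk1 : 1 ≤ k) (hk2 : k ≤ p - 2) :
    (∃ φ : Gamma2 p →* Multiplicative (ZMod p),
        φ (xg p) = Multiplicative.ofAdd (1 : ZMod p) ∧
        φ (yg p) = Multiplicative.ofAdd (k : ZMod p)) ∧
    (∀ φ : Gamma2 p →* Multiplicative (ZMod p),
        φ (xg p) = Multiplicative.ofAdd (1 : ZMod p) →
        φ (yg p) = Multiplicative.ofAdd (k : ZMod p) →
        Function.Surjective φ ∧
        φ.ker = Subgroup.closure
          {g : Gamma2 p | ∃ j : ℕ, j < p ∧
            g = xg p ^ (j * k) * (xg p ^ k * (yg p)⁻¹) * (xg p ^ (j * k))⁻¹}) := by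
  have hkp : k < p := by omega
  haveI : NeZero p := ⟨hp.pos.ne'⟩
  constructor
  · -- existence
    have hrel : ∀ r ∈ rels2 p,
        FreeGroup.lift (![Multiplicative.ofAdd (1 : ZMod p),
          Multiplicative.ofAdd (k : ZMod p)] : Fin 2 → Multiplicative (ZMod p)) r = 1 := by
      rintro r (rfl | rfl | rfl) <;>
        simp [map_pow, St7.zpow_p]
    refine ⟨PresentedGroup.toGroup hrel, ?_, ?_⟩
    · exact PresentedGroup.toGroup.of hrel
    · exact PresentedGroup.toGroup.of hrel
  · intro φ hx hy
    have hxpow : ∀ m : ℕ, φ (xg p ^ m) = Multiplicative.ofAdd (m : ZMod p) := by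
      intro m
      rw [map_pow, hx, St7.ofAdd_one_pow]
    have hsub : St7.N p k ≤ φ.ker := by
      refine Subgroup.closure_le _ |>.mpr ?_
      rintro g ⟨j, hj, rfl⟩
      have : φ (xg p ^ k * (yg p)⁻¹) = 1 := by
        rw [map_mul, map_inv, hxpow, hy, mul_inv_cancel]
      simp [MonoidHom.mem_ker, map_mul, map_inv, this]
    constructor
    · -- surjective
      intro z
      refine ⟨xg p ^ (Multiplicative.toAdd z).val, ?_⟩
      rw [hxpow, ZMod.natCast_zmod_val, ofAdd_toAdd]
    · -- kernel
      apply le_antisymm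
      · intro g hg
        obtain ⟨m, hm⟩ := St7.decomp hp hk1 hkp (k := k) g
        have hφm : φ (xg p ^ m) = 1 := by
          have h1 : φ ((xg p ^ m)⁻¹ * g) = 1 := hsub hm
          rw [map_mul, map_inv, (show φ g = 1 from hg), mul_one,
            inv_eq_one] at h1
          exact h1
        have hpm : p ∣ m := by
          rw [hxpow] at hφm
          have : (m : ZMod p) = 0 := by
            have := congrArg Multiplicative.toAdd hφm
            simpa using this
          exact (ZMod.natCast_eq_zero_iff m p).mp this
        have hxm : xg p ^ m = 1 := by
          obtain ⟨c, rfl⟩ := hpm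
          rw [pow_mul, St7.x_pow_p, one_pow]
        have : g ∈ St7.N p k := by
          have := hm
          rw [hxm, inv_one, one_mul] at this
          exact this
        exact this
      · exact hsub
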